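/- Let k ≥ 2 and let λ_0 > λ_1 > … > λ_{2k−1} be the 2k real numbers λ_i = k−i and λ_{k+i} = −(i+1) for 0 ≤ i < k, and set π_i = ∏_{j=0, j≠i}^{2k−1} |λ_i − λ_j|. Then for all 0 ≤ i < k, π_0/π_i = π_0/π_{2k−(i+1)} = ((k−i)/k)·C(2k, i). -/

import Mathlib

open Finset Nat

lemma dist_cast (m n : ℕ) : ((Nat.dist m n : ℕ) : ℝ) = |(m:ℝ) - n| := by
  rcases le_total m n with h | h
  · rw [Nat.dist_eq_sub_of_le h, abs_sub_comm,
      abs_of_nonneg (by have := Nat.cast_le (α := ℝ).mpr h; linarith)]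
    push_cast [h]; ring
  · rw [Nat.dist_comm, Nat.dist_eq_sub_of_le h,
      abs_of_nonneg (by have := Nat.cast_le (α := ℝ).mpr h; linarith)]
    push_cast [h]; ring

lemma prod_sub_fact (i : ℕ) : ∏ j ∈ range i, (i - j) = i ! := by
  induction i with
  | zero => simp
  | succ i ih =>
    rw [Finset.prod_range_succ' (fun j => i + 1 - j) i]
    simp only [Nat.succ_sub_succ]
    rw [ih, Nat.sub_zero, Nat.factorial_succ, mul_comm]

lemma prod_dist (n i : ℕ) (hi : i < n) :
    ∏ j ∈ range n, (if j = i then 1 else Nat.dist i j) = i ! * (n - 1 - i)! := by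
  induction n with
  | zero => omega
  | succ n ih =>
    rcases Nat.lt_or_ge i n with h | h
    · rw [Finset.prod_range_succ, ih h, if_neg (by omega),
        Nat.dist_eq_sub_of_le (le_of_lt h)]
      have h2 : n + 1 - 1 - i = (n - 1 - i) + 1 := by omega
      rw [h2, Nat.factorial_succ, show n - 1 - i + 1 = n - i by omega]
      ring
    · have hin : i = n := by omega
      subst hin
      rw [Finset.prod_range_succ, if_pos rfl, mul_one,
        show i + 1 - 1 - i = 0 by omega, Nat.factorial_zero, mul_one]
      rw [← prod_sub_fact i]
      refine Finset.prod_congr rfl fun j hj => ?_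
      rw [if_neg (by simp at hj; omega), Nat.dist_comm,
        Nat.dist_eq_sub_of_le (le_of_lt (by simpa using hj))]

lemma fact_mul_prod (m n : ℕ) : m ! * ∏ t ∈ range n, (m + t + 1) = (m + n)! := by
  induction n with
  | zero => simp
  | succ n ih =>
    rw [Finset.prod_range_succ, ← mul_assoc, ih, show m + (n+1) = (m+n)+1 by ring,
      Nat.factorial_succ, mul_comm]

noncomputable def Lf (k : ℕ) : ℕ → ℝ :=
  fun j => if j < k then (k:ℝ) - j else -(((j - k : ℕ):ℝ) + 1)

lemma erase_prod_eq {n : ℕ} (F : Fin n → ℝ) (x : Fin n) :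
    ∏ j ∈ Finset.univ.erase x, F j = ∏ j, (if j = x then (1:ℝ) else F j) := by
  rw [← Finset.mul_prod_erase Finset.univ (fun j => if j = x then (1:ℝ) else F j)
    (Finset.mem_univ x), if_pos rfl, one_mul]
  exact Finset.prod_congr rfl fun j hj => (if_neg (Finset.ne_of_mem_erase hj)).symm

lemma pi_as_range (k : ℕ) (hk : 2 ≤ k)
    (lam : Fin (2 * k) → ℝ)
    (hlam₁ : ∀ i : ℕ, ∀ hi : i < k, lam ⟨i, lt_of_lt_of_le hi (by omega)⟩ = (k : ℝ) - i)
    (hlam₂ : ∀ i : ℕ, ∀ hi : i < k, lam ⟨k + i, lt_of_lt_of_le (Nat.add_lt_add_left hi k) (by omega)⟩ = -((i : ℝ) + 1))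
    (pi : Fin (2 * k) → ℝ)
    (hpi : ∀ i, pi i = ∏ j ∈ Finset.univ.erase i, |lam i - lam j|)
    (m : ℕ) (hm : m < 2 * k) :
    pi ⟨m, hm⟩ = ∏ j ∈ range (2*k), (if j = m then (1:ℝ) else |Lf k m - Lf k j|) := by
  have hL : ∀ j : Fin (2*k), lam j = Lf k (j:ℕ) := by
    rintro ⟨j, hj⟩
    by_cases h : j < k
    · rw [hlam₁ j h]; simp [Lf, h]
    · have h2 : j - k < k := by omega
      have he : (⟨j, hj⟩ : Fin (2*k)) = ⟨k + (j - k), by omega⟩ := by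
        apply Fin.ext; simp; omega
      rw [he, hlam₂ (j - k) h2]
      simp only [Lf]
      rw [if_neg (by omega), Nat.add_sub_cancel_left]
  rw [hpi, erase_prod_eq]
  rw [show (∏ j, (if j = (⟨m, hm⟩ : Fin (2*k)) then (1:ℝ) else |lam ⟨m, hm⟩ - lam j|))
      = ∏ j : Fin (2*k), (fun n : ℕ => if n = m then (1:ℝ) else |Lf k m - Lf k n|) (j:ℕ) from
    Finset.prod_congr rfl fun j _ => by
      simp only [Fin.ext_iff]
      rw [hL j, hL ⟨m, hm⟩]]
  exact Fin.prod_univ_eq_prod_range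
    (fun n : ℕ => if n = m then (1:ℝ) else |Lf k m - Lf k n|) (2*k)

lemma prod_eval_pos (k i : ℕ) (hk : 2 ≤ k) (hi : i < k) :
    ∏ j ∈ range (2*k), (if j = i then (1:ℝ) else |Lf k i - Lf k j|)
      = ((i ! * (k-1-i)! * ∏ t ∈ range k, (k - i + t + 1) : ℕ) : ℝ) := by
  rw [two_mul, Finset.prod_range_add]
  have h1 : ∏ j ∈ range k, (if j = i then (1:ℝ) else |Lf k i - Lf k j|)
      = ((∏ j ∈ range k, (if j = i then 1 else Nat.dist i j) : ℕ) : ℝ) := by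
    rw [Nat.cast_prod]
    refine Finset.prod_congr rfl fun j hj => ?_
    simp only [mem_range] at hj
    by_cases h : j = i
    · simp [h]
    · rw [if_neg h, if_neg h, dist_cast]
      simp only [Lf, if_pos hi, if_pos hj]
      rw [show (k:ℝ) - i - ((k:ℝ) - j) = -((i:ℝ) - j) by ring, abs_neg]
  have h2 : ∏ t ∈ range k, (if k + t = i then (1:ℝ) else |Lf k i - Lf k (k + t)|)
      = ((∏ t ∈ range k, (k - i + t + 1) : ℕ) : ℝ) := by
    rw [Nat.cast_prod]
    refine Finset.prod_congr rfl fun t ht => ?_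
    simp only [mem_range] at ht
    rw [if_neg (by omega)]
    simp only [Lf, if_pos hi, if_neg (show ¬ k + t < k by omega), Nat.add_sub_cancel_left]
    have hik : (i:ℝ) ≤ k := by exact_mod_cast hi.le
    rw [abs_of_nonneg (by push_cast; linarith)]
    push_cast [Nat.cast_sub hi.le]
    ring
  rw [h1, h2, prod_dist k i hi, ← Nat.cast_mul]

lemma prod_eval_neg (k i : ℕ) (hk : 2 ≤ k) (hi : i < k) :
    ∏ j ∈ range (2*k), (if j = 2*k - (i+1) then (1:ℝ) else |Lf k (2*k - (i+1)) - Lf k j|)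
      = ((i ! * (k-1-i)! * ∏ t ∈ range k, (k - i + t + 1) : ℕ) : ℝ) := by
  set m := 2*k - (i+1) with hm
  have hmk : ¬ m < k := by omega
  have hmk2 : m - k = k - 1 - i := by omega
  rw [two_mul, Finset.prod_range_add]
  have h1 : ∏ j ∈ range k, (if j = m then (1:ℝ) else |Lf k m - Lf k j|)
      = ((∏ j ∈ range k, (k - i + (k - 1 - j) + 1) : ℕ) : ℝ) := by
    rw [Nat.cast_prod]
    refine Finset.prod_congr rfl fun j hj => ?_
    simp only [mem_range] at hj
    rw [if_neg (by omega)]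
    simp only [Lf, if_pos hj, if_neg hmk]
    have hjk : (j:ℝ) ≤ k := by exact_mod_cast hj.le
    rw [abs_of_nonpos (by have h0 : (0:ℝ) ≤ ((m - k : ℕ):ℝ) := Nat.cast_nonneg _; linarith)]
    have hnat : (k - i + (k - 1 - j) + 1 : ℕ) = (m - k) + 1 + (k - j) := by omega
    rw [hnat]
    push_cast [Nat.cast_sub (show j ≤ k by omega)]
    ring
  have h2 : ∏ u ∈ range k, (if k + u = m then (1:ℝ) else |Lf k m - Lf k (k + u)|)
      = ((∏ u ∈ range k, (if u = k - 1 - i then 1 else Nat.dist (k - 1 - i) u) : ℕ) : ℝ) := by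
    rw [Nat.cast_prod]
    refine Finset.prod_congr rfl fun u hu => ?_
    simp only [mem_range] at hu
    by_cases h : u = k - 1 - i
    · rw [if_pos (by omega), if_pos h]; simp
    · rw [if_neg (by omega), if_neg h, dist_cast]
      simp only [Lf, if_neg hmk, if_neg (show ¬ k + u < k by omega),
        Nat.add_sub_cancel_left, hmk2]
      rw [show -(((k-1-i : ℕ):ℝ) + 1) - -((u:ℝ) + 1) = -(((k-1-i:ℕ):ℝ) - u) by ring, abs_neg]
  rw [h1, h2, prod_dist k (k-1-i) (by omega), show k - 1 - (k-1-i) = i by omega,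
    ← Nat.cast_mul]
  congr 1
  rw [show (∏ j ∈ range k, (k - i + (k - 1 - j) + 1) : ℕ)
      = ∏ t ∈ range k, (k - i + t + 1) from Finset.prod_range_reflect (fun t => k - i + t + 1) k]
  ring

/-- For the `2k` numbers `λ_i = k - i`, `λ_{k+i} = -(i+1)` (`0 ≤ i < k`) and
`π_i = ∏_{j ≠ i} |λ_i - λ_j|`, one has
`π_0/π_i = π_0/π_{2k-(i+1)} = ((k-i)/k)·C(2k, i)` for all `0 ≤ i < k`. -/
theorem pi_ratio_formula (k : ℕ) (hk : 2 ≤ k)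
    (lam : Fin (2 * k) → ℝ)
    (hlam₁ : ∀ i : ℕ, ∀ hi : i < k, lam ⟨i, by omega⟩ = (k : ℝ) - i)
    (hlam₂ : ∀ i : ℕ, ∀ hi : i < k, lam ⟨k + i, by omega⟩ = -((i : ℝ) + 1))
    (pi : Fin (2 * k) → ℝ)
    (hpi : ∀ i, pi i = ∏ j ∈ Finset.univ.erase i, |lam i - lam j|) :
    ∀ i : ℕ, ∀ hi : i < k,
      pi ⟨0, by omega⟩ / pi ⟨i, by omega⟩ =
        (((k : ℝ) - i) / k) * Nat.choose (2 * k) i ∧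
      pi ⟨0, by omega⟩ / pi ⟨2 * k - (i + 1), by omega⟩ =
        (((k : ℝ) - i) / k) * Nat.choose (2 * k) i := by
  intro i hi
  have h0k : 0 < k := by omega
  set N : ℕ → ℕ := fun i => i ! * (k-1-i)! * ∏ t ∈ range k, (k - i + t + 1) with hN
  have e0 : pi ⟨0, by omega⟩ = ((N 0 : ℕ) : ℝ) := by
    rw [pi_as_range k hk lam hlam₁ hlam₂ pi hpi 0 (by omega), prod_eval_pos k 0 hk (by omega)]
  have e1 : pi ⟨i, by omega⟩ = ((N i : ℕ) : ℝ) := by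
    rw [pi_as_range k hk lam hlam₁ hlam₂ pi hpi i (by omega), prod_eval_pos k i hk hi]
  have e2 : pi ⟨2 * k - (i + 1), by omega⟩ = ((N i : ℕ) : ℝ) := by
    rw [pi_as_range k hk lam hlam₁ hlam₂ pi hpi (2*k - (i+1)) (by omega),
      prod_eval_neg k i hk hi]
  -- nat identities
  have hNA : N i * (k-i)! = i ! * (k-1-i)! * (2*k-i)! := by
    have h := fact_mul_prod (k-i) k
    rw [show k - i + k = 2*k - i by omega] at h
    calc N i * (k-i)! = i ! * (k-1-i)! * ((k-i)! * ∏ t ∈ range k, (k - i + t + 1)) := by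
          simp only [hN]; ring
      _ = _ := by rw [h]
  have hN0 : N 0 * k ! = (k-1)! * (2*k)! := by
    have h := fact_mul_prod k k
    rw [show k + k = 2*k by ring] at h
    calc N 0 * k ! = (k-1)! * (k ! * ∏ t ∈ range k, (k + t + 1)) := by
          simp only [hN, Nat.sub_zero, Nat.factorial_zero, one_mul]; ring
      _ = _ := by rw [h]
  have hNipos : 0 < N i := by
    refine Nat.mul_pos (Nat.mul_pos (Nat.factorial_pos _) (Nat.factorial_pos _)) ?_
    exact Finset.prod_pos fun t _ => by omega
  have hNine : ((N i : ℕ) : ℝ) ≠ 0 := Nat.cast_ne_zero.mpr hNipos.ne'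
  have hkne : ((k : ℕ) : ℝ) ≠ 0 := Nat.cast_ne_zero.mpr h0k.ne'
  have E1 : ((N i : ℕ) : ℝ) * ((k-i)! : ℝ) = ((i ! : ℕ) : ℝ) * (((k-1-i)! : ℕ) : ℝ) * (((2*k-i)! : ℕ) : ℝ) := by
    exact_mod_cast hNA
  have E2 : ((N 0 : ℕ) : ℝ) * ((k ! : ℕ) : ℝ) = (((k-1)! : ℕ) : ℝ) * (((2*k)! : ℕ) : ℝ) := by
    exact_mod_cast hN0
  have E3 : ((Nat.choose (2*k) i : ℕ) : ℝ) * ((i ! : ℕ) : ℝ) * (((2*k-i)! : ℕ) : ℝ)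
      = (((2*k)! : ℕ) : ℝ) := by
    exact_mod_cast Nat.choose_mul_factorial_mul_factorial (show i ≤ 2*k by omega)
  have E4 : (((k-i)! : ℕ) : ℝ) = ((k-i : ℕ) : ℝ) * (((k-1-i)! : ℕ) : ℝ) := by
    have : (k-i) * (k-i-1)! = (k-i)! := Nat.mul_factorial_pred (by omega)
    rw [show k-1-i = k-i-1 by omega]
    exact_mod_cast this.symm
  have E5 : ((k ! : ℕ) : ℝ) = ((k : ℕ) : ℝ) * (((k-1)! : ℕ) : ℝ) := by
    exact_mod_cast (Nat.mul_factorial_pred h0k.ne').symm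
  have hfne1 : (((k-1)! : ℕ) : ℝ) ≠ 0 := Nat.cast_ne_zero.mpr (Nat.factorial_ne_zero _)
  have hfne2 : (((k-1-i)! : ℕ) : ℝ) ≠ 0 := Nat.cast_ne_zero.mpr (Nat.factorial_ne_zero _)
  have D1 : ((N 0 : ℕ) : ℝ) * (k : ℝ) = (((2*k)! : ℕ) : ℝ) := by
    apply mul_right_cancel₀ hfne1
    rw [E5] at E2
    linear_combination E2
  have D2 : ((N i : ℕ) : ℝ) * ((k-i : ℕ) : ℝ) = ((i ! : ℕ) : ℝ) * (((2*k-i)! : ℕ) : ℝ) := by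
    apply mul_right_cancel₀ hfne2
    rw [E4] at E1
    linear_combination E1
  have hsub : ((k : ℝ) - i) = ((k - i : ℕ) : ℝ) := by
    push_cast [Nat.cast_sub hi.le]; ring
  constructor
  · rw [e0, e1, hsub, div_mul_eq_mul_div, div_eq_div_iff hNine hkne]
    linear_combination D1 - E3 - ((Nat.choose (2*k) i : ℕ) : ℝ) * D2
  · rw [e0, e2, hsub, div_mul_eq_mul_div, div_eq_div_iff hNine hkne]
    linear_combination D1 - E3 - ((Nat.choose (2*k) i : ℕ) : ℝ) * D2
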